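/- The language (aa)* over alphabet {a} (words of even length) is not recognizable by any C-RASP program without positional relations. -/

import Mathlib

mutual
/-- Syntax of C-RASP programs without positional relations: Boolean-valued
operations. A program (a sequence of operations, each possibly referring to
earlier ones) is represented by the expression tree of its final
Boolean-valued operation. -/
inductive BExpr (α : Type) : Type
  | tok : α → BExpr α                      -- initial operation `Q_σ(i)`
  | not : BExpr α → BExpr α                -- Boolean negation
  | and : BExpr α → BExpr α → BExpr α      -- Boolean conjunction
  | top : BExpr α                          -- constant ⊤
  | le  : CExpr α → CExpr α → BExpr α      -- comparison `C₁(i) ≤ C₂(i)`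
/-- Count-valued C-RASP operations. -/
inductive CExpr (α : Type) : Type
  | count : BExpr α → CExpr α              -- `#{j ≤ i : P(j)}`
  | cond  : BExpr α → CExpr α → CExpr α → CExpr α  -- conditional
  | add : CExpr α → CExpr α → CExpr α      -- addition
  | sub : CExpr α → CExpr α → CExpr α      -- subtraction
  | one : CExpr α                          -- constant 1
end

mutual
/-- Evaluation of a Boolean-valued C-RASP operation on word `w` at
(0-based) position `i`. -/
def BExpr.eval {α : Type} [DecidableEq α] (w : List α) : BExpr α → ℕ → Bool
  | .tok σ, i => decide (w[i]? = some σ)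
  | .not b, i => ! b.eval w i
  | .and b₁ b₂, i => b₁.eval w i && b₂.eval w i
  | .top, _ => true
  | .le c₁ c₂, i => decide (c₁.eval w i ≤ c₂.eval w i)
/-- Evaluation of a count-valued C-RASP operation on word `w` at position `i`. -/
def CExpr.eval {α : Type} [DecidableEq α] (w : List α) : CExpr α → ℕ → ℤ
  | .count b, i => ((List.range (i + 1)).countP (fun j => b.eval w j) : ℤ)
  | .cond b c₁ c₂, i => if b.eval w i then c₁.eval w i else c₂.eval w i
  | .add c₁ c₂, i => c₁.eval w i + c₂.eval w i
  | .sub c₁ c₂, i => c₁.eval w i - c₂.eval w i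
  | .one, _ => 1
end

/-- A C-RASP program accepts a word iff its final Boolean-valued operation is
true at the last position of the word. -/
def BExpr.accepts {α : Type} [DecidableEq α] (P : BExpr α) (w : List α) : Prop :=
  P.eval w (w.length - 1) = true

mutual
/-- Evaluation on the "infinite" unary word. -/
def BExpr.evalU : BExpr Unit → ℕ → Bool
  | .tok _, _ => true
  | .not b, i => ! b.evalU i
  | .and b₁ b₂, i => b₁.evalU i && b₂.evalU i
  | .top, _ => true
  | .le c₁ c₂, i => decide (c₁.evalU i ≤ c₂.evalU i)
def CExpr.evalU : CExpr Unit → ℕ → ℤ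
  | .count b, i => ((List.range (i + 1)).countP (fun j => b.evalU j) : ℤ)
  | .cond b c₁ c₂, i => if b.evalU i then c₁.evalU i else c₂.evalU i
  | .add c₁ c₂, i => c₁.evalU i + c₂.evalU i
  | .sub c₁ c₂, i => c₁.evalU i - c₂.evalU i
  | .one, _ => 1
end

mutual
theorem BExpr.eval_eq_evalU : ∀ (B : BExpr Unit) (m i : ℕ), i < m →
    B.eval (List.replicate m ()) i = B.evalU i
  | .tok σ, m, i, h => by
      simp [BExpr.eval, BExpr.evalU, List.getElem?_replicate, h]
  | .not b, m, i, h => by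
      simp [BExpr.eval, BExpr.evalU, BExpr.eval_eq_evalU b m i h]
  | .and b₁ b₂, m, i, h => by
      simp [BExpr.eval, BExpr.evalU, BExpr.eval_eq_evalU b₁ m i h,
        BExpr.eval_eq_evalU b₂ m i h]
  | .top, m, i, h => rfl
  | .le c₁ c₂, m, i, h => by
      simp [BExpr.eval, BExpr.evalU, CExpr.eval_eq_evalU c₁ m i h,
        CExpr.eval_eq_evalU c₂ m i h]
theorem CExpr.eval_eq_evalU : ∀ (C : CExpr Unit) (m i : ℕ), i < m →
    C.eval (List.replicate m ()) i = C.evalU i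
  | .count b, m, i, h => by
      simp only [CExpr.eval, CExpr.evalU]
      congr 1
      apply List.countP_congr
      intro j hj
      have hj' : j < i + 1 := List.mem_range.mp hj
      have : j < m := lt_of_lt_of_le hj' h
      simp [BExpr.eval_eq_evalU b m j this]
  | .cond b c₁ c₂, m, i, h => by
      simp [CExpr.eval, CExpr.evalU, BExpr.eval_eq_evalU b m i h,
        CExpr.eval_eq_evalU c₁ m i h, CExpr.eval_eq_evalU c₂ m i h]
  | .add c₁ c₂, m, i, h => by
      simp [CExpr.eval, CExpr.evalU, CExpr.eval_eq_evalU c₁ m i h,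
        CExpr.eval_eq_evalU c₂ m i h]
  | .sub c₁ c₂, m, i, h => by
      simp [CExpr.eval, CExpr.evalU, CExpr.eval_eq_evalU c₁ m i h,
        CExpr.eval_eq_evalU c₂ m i h]
  | .one, m, i, h => rfl
end

/-- Comparison of two eventually-affine functions is eventually constant. -/
theorem affine_le_eventually (a₁ b₁ a₂ b₂ : ℤ) :
    ∃ (N : ℕ) (c : Bool), ∀ i : ℕ, N ≤ i →
      decide (a₁ + b₁ * i ≤ a₂ + b₂ * i) = c := by
  rcases lt_trichotomy b₁ b₂ with hb | hb | hb
  · refine ⟨(a₁ - a₂).toNat, true, fun i hi => ?_⟩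
    have h1 : a₁ - a₂ ≤ (i : ℤ) := by
      have := Int.toNat_le.mp hi
      omega
    have h2 : (i : ℤ) ≤ (b₂ - b₁) * i := by
      have : (1 : ℤ) ≤ b₂ - b₁ := by omega
      nlinarith [Int.ofNat_nonneg i]
    simp only [decide_eq_true_eq]
    nlinarith
  · subst hb
    refine ⟨0, decide (a₁ ≤ a₂), fun i _ => ?_⟩
    simp
  · refine ⟨(a₂ - a₁ + 1).toNat, false, fun i hi => ?_⟩
    have h1 : a₂ - a₁ + 1 ≤ (i : ℤ) := by
      have := Int.toNat_le.mp hi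
      omega
    have h2 : (i : ℤ) ≤ (b₁ - b₂) * i := by
      have : (1 : ℤ) ≤ b₁ - b₂ := by omega
      nlinarith [Int.ofNat_nonneg i]
    simp only [decide_eq_false_iff_not, not_le]
    nlinarith

/-- Counting an eventually constant predicate is eventually affine. -/
theorem count_eventually_affine (p : ℕ → Bool) (N : ℕ) (c : Bool)
    (h : ∀ i : ℕ, N ≤ i → p i = c) :
    ∃ a b : ℤ, ∀ i : ℕ, N ≤ i →
      ((List.range (i + 1)).countP p : ℤ) = a + b * i := by
  set b : ℤ := if c then 1 else 0 with hb
  refine ⟨((List.range (N + 1)).countP p : ℤ) - b * N, b, ?_⟩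
  intro i hi
  induction i, hi using Nat.le_induction with
  | base => ring
  | succ n hn ih =>
    rw [List.range_succ, List.countP_append]
    have hp : p (n + 1) = c := h (n + 1) (by omega)
    have hc : ((List.countP p [n + 1] : ℕ) : ℤ) = b := by
      simp [List.countP, List.countP.go, hp, hb]
      cases c <;> simp
    push_cast
    push_cast at ih hc
    rw [hc, ih]
    ring

mutual
theorem BExpr.evalU_const : ∀ B : BExpr Unit,
    ∃ (N : ℕ) (c : Bool), ∀ i : ℕ, N ≤ i → B.evalU i = c
  | .tok _ => ⟨0, true, fun _ _ => rfl⟩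
  | .top => ⟨0, true, fun _ _ => rfl⟩
  | .not b => by
      obtain ⟨N, c, h⟩ := BExpr.evalU_const b
      exact ⟨N, !c, fun i hi => by simp [BExpr.evalU, h i hi]⟩
  | .and b₁ b₂ => by
      obtain ⟨N₁, c₁, h₁⟩ := BExpr.evalU_const b₁
      obtain ⟨N₂, c₂, h₂⟩ := BExpr.evalU_const b₂
      exact ⟨max N₁ N₂, c₁ && c₂, fun i hi => by
        simp [BExpr.evalU, h₁ i (le_trans (le_max_left _ _) hi),
          h₂ i (le_trans (le_max_right _ _) hi)]⟩
  | .le c₁ c₂ => by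
      obtain ⟨N₁, a₁, b₁, h₁⟩ := CExpr.evalU_affine c₁
      obtain ⟨N₂, a₂, b₂, h₂⟩ := CExpr.evalU_affine c₂
      obtain ⟨N₃, c, h₃⟩ := affine_le_eventually a₁ b₁ a₂ b₂
      refine ⟨max N₃ (max N₁ N₂), c, fun i hi => ?_⟩
      have hi₁ : N₁ ≤ i := le_trans (le_trans (le_max_left _ _) (le_max_right _ _)) hi
      have hi₂ : N₂ ≤ i := le_trans (le_trans (le_max_right _ _) (le_max_right _ _)) hi
      have hi₃ : N₃ ≤ i := le_trans (le_max_left _ _) hi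
      simp only [BExpr.evalU, h₁ i hi₁, h₂ i hi₂]
      exact h₃ i hi₃
theorem CExpr.evalU_affine : ∀ C : CExpr Unit,
    ∃ (N : ℕ) (a b : ℤ), ∀ i : ℕ, N ≤ i → C.evalU i = a + b * i
  | .one => ⟨0, 1, 0, fun i _ => by simp [CExpr.evalU]⟩
  | .count b => by
      obtain ⟨N, c, h⟩ := BExpr.evalU_const b
      obtain ⟨a, b', h'⟩ := count_eventually_affine (fun j => b.evalU j) N c h
      exact ⟨N, a, b', fun i hi => h' i hi⟩
  | .cond b c₁ c₂ => by
      obtain ⟨N₀, c, h₀⟩ := BExpr.evalU_const b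
      obtain ⟨N₁, a₁, b₁, h₁⟩ := CExpr.evalU_affine c₁
      obtain ⟨N₂, a₂, b₂, h₂⟩ := CExpr.evalU_affine c₂
      refine ⟨max N₀ (max N₁ N₂), if c then a₁ else a₂, if c then b₁ else b₂,
        fun i hi => ?_⟩
      have hi₀ : N₀ ≤ i := le_trans (le_max_left _ _) hi
      have hi₁ : N₁ ≤ i := le_trans (le_trans (le_max_left _ _) (le_max_right _ _)) hi
      have hi₂ : N₂ ≤ i := le_trans (le_trans (le_max_right _ _) (le_max_right _ _)) hi
      simp only [CExpr.evalU, h₀ i hi₀]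
      cases c <;> simp [h₁ i hi₁, h₂ i hi₂]
  | .add c₁ c₂ => by
      obtain ⟨N₁, a₁, b₁, h₁⟩ := CExpr.evalU_affine c₁
      obtain ⟨N₂, a₂, b₂, h₂⟩ := CExpr.evalU_affine c₂
      refine ⟨max N₁ N₂, a₁ + a₂, b₁ + b₂, fun i hi => ?_⟩
      simp only [CExpr.evalU, h₁ i (le_trans (le_max_left _ _) hi),
        h₂ i (le_trans (le_max_right _ _) hi)]
      ring
  | .sub c₁ c₂ => by
      obtain ⟨N₁, a₁, b₁, h₁⟩ := CExpr.evalU_affine c₁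
      obtain ⟨N₂, a₂, b₂, h₂⟩ := CExpr.evalU_affine c₂
      refine ⟨max N₁ N₂, a₁ - a₂, b₁ - b₂, fun i hi => ?_⟩
      simp only [CExpr.evalU, h₁ i (le_trans (le_max_left _ _) hi),
        h₂ i (le_trans (le_max_right _ _) hi)]
      ring
end

/-- The language `(aa)*` of even-length words over the unary alphabet is not
recognizable by any C-RASP program without positional relations. -/
theorem stmt12 :
    ¬ ∃ P : BExpr Unit, ∀ m : ℕ, (P.accepts (List.replicate m ()) ↔ Even m) := by
  rintro ⟨P, hP⟩
  obtain ⟨N, c, hc⟩ := P.evalU_const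
  have key : ∀ m : ℕ, N + 1 ≤ m → (P.evalU (m - 1) = true ↔ Even m) := by
    intro m hm
    have h1 : m - 1 < m := by omega
    have := hP m
    rw [BExpr.accepts, List.length_replicate,
      P.eval_eq_evalU m (m - 1) h1] at this
    exact this
  have h1 := key (2 * N + 2) (by omega)
  have h2 := key (2 * N + 3) (by omega)
  rw [hc (2 * N + 2 - 1) (by omega)] at h1
  rw [hc (2 * N + 3 - 1) (by omega)] at h2
  have he : Even (2 * N + 2) := ⟨N + 1, by ring⟩
  have ho : ¬ Even (2 * N + 3) := by
    simp [Nat.even_add_one, Nat.even_add_one, parity_simps]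
  have : c = true := h1.mpr he
  exact ho (h2.mp this)
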